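/- Plane-support claim (intermediate step in the phase-unwrapping theorem): Let h ∈ O_n and suppose the family (α_l,β_l), l = 1,…,n, satisfies the diversity condition. If there is a function c : ℤ² → ℂ such that ĥ_{(1,α_l,β_l)}(η,ζ) = c(η,ζ) for every l = 1,…,n and all integers (η,ζ), then h(m,j,k) = 0 whenever m ≠ 0; that is, h is supported on the plane where the first coordinate vanishes. -/

import Mathlib

open Complex MeasureTheory ProbabilityTheory BigOperators

noncomputable section

namespace Tomo3D

/-- `Z_m`: the integers in `[-(m-1)/2, (m-1)/2]` (for odd `m`). -/
def Zf (m : ℕ) : Finset ℤ :=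
  Finset.Icc (-(((m : ℤ) - 1) / 2)) (((m : ℤ) - 1) / 2)

/-- `Z_m²`. -/
def Zf2 (m : ℕ) : Finset (ℤ × ℤ) := Zf m ×ˢ Zf m

/-- The `p`-periodic Dirichlet kernel `D_p`. -/
def Dk (p : ℕ) (t : ℝ) : ℂ :=
  (p : ℂ)⁻¹ * ∑ l ∈ Zf p,
    Complex.exp (2 * (Real.pi : ℂ) * Complex.I * (l : ℂ) * (t : ℂ) / (p : ℂ))

/-- The class `O_n`: objects supported in `Z_n³`. -/
def IsObj (n : ℕ) (f : ℤ → ℤ → ℤ → ℂ) : Prop :=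
  ∀ i j k : ℤ, i ∉ Zf n ∨ j ∉ Zf n ∨ k ∉ Zf n → f i j k = 0

/-- Continuous interpolation `f̃` of an object. -/
def interp (n : ℕ) (f : ℤ → ℤ → ℤ → ℂ) (x y z : ℝ) : ℂ :=
  ∑ i ∈ Zf n, ∑ j ∈ Zf n, ∑ k ∈ Zf n,
    f i j k * Dk (2 * n - 1) (x - (i : ℝ)) * Dk (2 * n - 1) (y - (j : ℝ)) *
      Dk (2 * n - 1) (z - (k : ℝ))

/-- Directions `(1,α,β)`, `(α,1,β)`, `(α,β,1)`. -/
inductive Dir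
  | dx (α β : ℝ)
  | dy (α β : ℝ)
  | dz (α β : ℝ)

/-- Validity of a direction: the slopes satisfy `|α| < 1`, `|β| < 1`. -/
def Dir.valid : Dir → Prop
  | .dx α β => |α| < 1 ∧ |β| < 1
  | .dy α β => |α| < 1 ∧ |β| < 1
  | .dz α β => |α| < 1 ∧ |β| < 1

/-- The vector in `ℝ³` attached to a direction. -/
def Dir.toVec : Dir → ℝ × ℝ × ℝ
  | .dx α β => (1, α, β)
  | .dy α β => (α, 1, β)
  | .dz α β => (α, β, 1)

/-- Two directions are parallel if one is a real scalar multiple of the other. -/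
def Dir.Parallel (t t' : Dir) : Prop :=
  ∃ c : ℝ, t'.toVec = c • t.toVec ∨ t.toVec = c • t'.toVec

/-- Discrete projection of an object along a direction, regarded as a function on
`Z_{2n-1}²` extended by zero to `ℤ²`. -/
def proj (n : ℕ) (f : ℤ → ℤ → ℤ → ℂ) : Dir → ℤ × ℤ → ℂ
  | .dx α β => fun c =>
      if c ∈ Zf2 (2 * n - 1) then
        ∑ i ∈ Zf n, interp n f (i : ℝ) (α * (i : ℝ) + (c.1 : ℝ)) (β * (i : ℝ) + (c.2 : ℝ))
      else 0
  | .dy α β => fun c =>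
      if c ∈ Zf2 (2 * n - 1) then
        ∑ j ∈ Zf n, interp n f (α * (j : ℝ) + (c.1 : ℝ)) (j : ℝ) (β * (j : ℝ) + (c.2 : ℝ))
      else 0
  | .dz α β => fun c =>
      if c ∈ Zf2 (2 * n - 1) then
        ∑ k ∈ Zf n, interp n f (α * (k : ℝ) + (c.1 : ℝ)) (β * (k : ℝ) + (c.2 : ℝ)) (k : ℝ)
      else 0

/-- 3D discrete Fourier transform of an object (defined for all real frequencies). -/
def ft3 (n : ℕ) (f : ℤ → ℤ → ℤ → ℂ) (ξ η ζ : ℝ) : ℂ :=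
  ∑ i ∈ Zf n, ∑ j ∈ Zf n, ∑ k ∈ Zf n,
    f i j k *
      Complex.exp (-(2 * (Real.pi : ℂ) * Complex.I) *
        ((ξ : ℂ) * (i : ℂ) + (η : ℂ) * (j : ℂ) + (ζ : ℂ) * (k : ℂ)) /
          (((2 * n - 1 : ℕ) : ℂ)))

/-- 2D discrete Fourier transform of a projection (defined for all real frequencies). -/
def ft2 (n : ℕ) (g : ℤ × ℤ → ℂ) (η ζ : ℝ) : ℂ :=
  ∑ c ∈ Zf2 (2 * n - 1),
    g c *
      Complex.exp (-(2 * (Real.pi : ℂ) * Complex.I) *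
        ((η : ℂ) * (c.1 : ℂ) + (ζ : ℂ) * (c.2 : ℂ)) / (((2 * n - 1 : ℕ) : ℂ)))

/-- Diffraction pattern of `h : Z_p² → ℂ`. -/
def dpat (p : ℕ) (h : ℤ × ℤ → ℂ) (w : ℝ × ℝ) : ℝ :=
  ‖∑ m ∈ Zf2 p,
      h m * Complex.exp (-(2 * (Real.pi : ℂ) * Complex.I) *
        ((m.1 : ℂ) * (w.1 : ℂ) + (m.2 : ℂ) * (w.2 : ℂ)))‖ ^ 2

/-- `h₁` and `h₂` produce the same diffraction pattern (on `[-1/2,1/2]²`). -/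
def SameDP (p : ℕ) (h₁ h₂ : ℤ × ℤ → ℂ) : Prop :=
  ∀ w : ℝ × ℝ, w.1 ∈ Set.Icc (-(1 : ℝ) / 2) (1 / 2) →
    w.2 ∈ Set.Icc (-(1 : ℝ) / 2) (1 / 2) → dpat p h₁ w = dpat p h₂ w

/-- Autocorrelation of `h : ℤ² → ℂ`. -/
def autocorr (h : ℤ × ℤ → ℂ) (m : ℤ × ℤ) : ℂ :=
  ∑' m' : ℤ × ℤ, h (m' + m) * (starRingEnd ℂ) (h m')

/-- The random phase mask `μ(m) = exp(i φ(m))`. -/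
def mask {Ω : Type*} (φ : ℤ × ℤ → Ω → ℝ) (ω : Ω) (m : ℤ × ℤ) : ℂ :=
  Complex.exp (Complex.I * ((φ m ω : ℝ) : ℂ))

/-- The Mask Assumption: the phases `φ(m)`, `m ∈ Z_p²`, are independent real random
variables whose laws have no atoms. -/
def MaskAssumption {Ω : Type*} [MeasurableSpace Ω] (P : Measure Ω) (p : ℕ)
    (φ : ℤ × ℤ → Ω → ℝ) : Prop :=
  (∀ m, Measurable (φ m)) ∧
  iIndepFun (m := fun _ : {m : ℤ × ℤ // m ∈ Zf2 p} => (inferInstance : MeasurableSpace ℝ))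
    (fun m : {m : ℤ × ℤ // m ∈ Zf2 p} => φ m.1) P ∧
  ∀ m ∈ Zf2 p, ∀ r : ℝ, P {ω | φ m ω = r} = 0

/-- The uniform random phase mask: independent phases, uniformly distributed on `[0,2π)`. -/
def UniformMask {Ω : Type*} [MeasurableSpace Ω] (P : Measure Ω) (p : ℕ)
    (φ : ℤ × ℤ → Ω → ℝ) : Prop :=
  (∀ m, Measurable (φ m)) ∧
  iIndepFun (m := fun _ : {m : ℤ × ℤ // m ∈ Zf2 p} => (inferInstance : MeasurableSpace ℝ))
    (fun m : {m : ℤ × ℤ // m ∈ Zf2 p} => φ m.1) P ∧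
  ∀ m ∈ Zf2 p,
    P.map (φ m) = (ENNReal.ofReal (2 * Real.pi))⁻¹ • volume.restrict (Set.Ico 0 (2 * Real.pi))

/-- The representative of `x` modulo `p` lying in `Z_p` (for odd `p`). -/
def zmodRep (p : ℕ) (x : ℤ) : ℤ := (x + ((p : ℤ) - 1) / 2) % (p : ℤ) - ((p : ℤ) - 1) / 2

/-- `p`-periodic extension to `ℤ²` of a function on `Z_p²`. -/
def perExt (p : ℕ) (h : ℤ × ℤ → ℂ) (m : ℤ × ℤ) : ℂ := h (zmodRep p m.1, zmodRep p m.2)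

/-- A function on `ℤ²` is supported on a line. -/
def SuppOnLine (h : ℤ × ℤ → ℂ) : Prop :=
  ∃ a b : ℝ × ℝ, ∀ m : ℤ × ℤ, h m ≠ 0 →
    ∃ s : ℝ, ((m.1 : ℝ), (m.2 : ℝ)) = (a.1 + s * b.1, a.2 + s * b.2)

/-- The diversity condition for a family of slope pairs. -/
def Diversity (n : ℕ) (α β : Fin n → ℝ) : Prop :=
  (∀ l, |α l| < 1 ∧ |β l| < 1) ∧
  ∀ ξη : ℤ × ℤ, ξη ∈ Zf2 (2 * n - 1) → ξη ≠ (0, 0) →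
    ∀ l l' : Fin n, l ≠ l' →
      ¬ ∃ z : ℤ,
        α l * (ξη.1 : ℝ) + β l * (ξη.2 : ℝ) - (α l' * (ξη.1 : ℝ) + β l' * (ξη.2 : ℝ))
          = (z : ℝ) * (((2 * n - 1 : ℕ) : ℝ))

/-- The 3D Itoh condition for `κ`: variation less than `π/κ` between adjacent grid points. -/
def Itoh (n : ℕ) (κ : ℝ) (f : ℤ → ℤ → ℤ → ℂ) : Prop :=
  ∀ i j k i' j' k' : ℤ,
    i ∈ Zf n → j ∈ Zf n → k ∈ Zf n → i' ∈ Zf n → j' ∈ Zf n → k' ∈ Zf n →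
    ((|i - i'| = 1 ∧ j = j' ∧ k = k') ∨ (i = i' ∧ |j - j'| = 1 ∧ k = k') ∨
      (i = i' ∧ j = j' ∧ |k - k'| = 1)) →
    ‖f i j k - f i' j' k'‖ < Real.pi / κ

/-- The common set `L_{t,t'}(f)` for directions `t = (α,β,1)` and `t' = (α',β',1)`. -/
def commonSet (n : ℕ) (f : ℤ → ℤ → ℤ → ℂ) (α β α' β' : ℝ) : Set ((ℝ × ℝ) × (ℝ × ℝ)) :=
  {kk | ft2 n (proj n f (Dir.dz α β)) kk.1.1 kk.1.2
      = ft2 n (proj n f (Dir.dz α' β')) kk.2.1 kk.2.2}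

/-- `k` has a slope (its first component is nonzero) which is not a fraction over `Z_p`. -/
def BadSlope (p : ℕ) (k : ℝ × ℝ) : Prop :=
  k.1 ≠ 0 ∧ ∀ a b : ℤ, a ∈ Zf p → b ∈ Zf p → b ≠ 0 → k.2 / k.1 ≠ (a : ℝ) / (b : ℝ)

/-- Sector condition: every nonzero value of `h` has phase angle in `[a, b]` (mod 2π). -/
def Sector (a b : ℝ) (h : ℤ × ℤ → ℂ) : Prop :=
  ∀ m : ℤ × ℤ, h m ≠ 0 →
    ∃ θ ∈ Set.Icc a b, h m = ((‖h m‖ : ℝ) : ℂ) * Complex.exp (Complex.I * (θ : ℂ))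

open scoped Classical in
/-- Number of points of `Z_p²` where `h` does not vanish. -/
def nnz (p : ℕ) (h : ℤ × ℤ → ℂ) : ℕ := ((Zf2 p).filter fun m => h m ≠ 0).card

def ep (N : ℕ) (x : ℂ) : ℂ := Complex.exp (2 * (Real.pi : ℂ) * Complex.I * x / N)

lemma ep_add (N : ℕ) (x y : ℂ) : ep N (x + y) = ep N x * ep N y := by
  rw [ep, ep, ep, ← Complex.exp_add]; congr 1; ring

lemma ep_zero (N : ℕ) : ep N 0 = 1 := by simp [ep]

lemma ep_ne_zero (N : ℕ) (x : ℂ) : ep N x ≠ 0 := Complex.exp_ne_zero _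

lemma ep_int_mul (N : ℕ) (l : ℤ) (x : ℂ) : ep N ((l : ℂ) * x) = ep N x ^ l := by
  rw [ep, ep, ← Complex.exp_int_mul]; congr 1; ring

lemma ep_eq_one (N : ℕ) (hN0 : 0 < N) (x : ℤ) : ep N ((x : ℂ)) = 1 ↔ (N : ℤ) ∣ x := by
  rw [ep, Complex.exp_eq_one_iff]
  constructor
  · rintro ⟨k, hk⟩
    refine ⟨k, ?_⟩
    have hNc : (N : ℂ) ≠ 0 := by exact_mod_cast hN0.ne'
    rw [div_eq_iff hNc] at hk
    have h2 : (2 * (Real.pi:ℂ) * Complex.I) * (x : ℂ)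
        = (2 * (Real.pi:ℂ) * Complex.I) * ((k : ℂ) * (N : ℂ)) := by
      linear_combination hk
    have h3 : (x : ℂ) = (N : ℂ) * (k : ℂ) := by
      have := mul_left_cancel₀ Complex.two_pi_I_ne_zero h2
      rw [this]; ring
    exact_mod_cast h3
  · rintro ⟨k, rfl⟩
    refine ⟨k, ?_⟩
    have hNc : (N : ℂ) ≠ 0 := by exact_mod_cast hN0.ne'
    push_cast
    field_simp

lemma ep_pow_N (N : ℕ) (hN0 : 0 < N) (x : ℤ) : ep N ((x : ℂ)) ^ (N : ℕ) = 1 := by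
  have hNc : (N : ℂ) ≠ 0 := by exact_mod_cast hN0.ne'
  rw [ep, ← Complex.exp_nat_mul]
  have : (N : ℂ) * (2 * (Real.pi : ℂ) * Complex.I * (x:ℂ) / N) = (x : ℂ) * (2 * Real.pi * Complex.I) := by
    field_simp
  rw [this, Complex.exp_int_mul_two_pi_mul_I]

lemma sum_ep (N : ℕ) (hN : Odd N) (x : ℤ) :
    ∑ l ∈ Zf N, ep N ((l : ℂ) * (x : ℂ)) = if (N : ℤ) ∣ x then (N : ℂ) else 0 := by
  obtain ⟨m, hm⟩ := hN
  have hN0 : 0 < N := by omega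
  set M : ℤ := ((N : ℤ) - 1) / 2 with hM
  have hNM : (N : ℤ) = 2 * M + 1 := by omega
  have hM0 : 0 ≤ M := by omega
  set ω : ℂ := ep N ((x : ℂ)) with hω
  have hωne : ω ≠ 0 := ep_ne_zero _ _
  have hterm : ∀ l : ℤ, ep N ((l : ℂ) * (x : ℂ)) = ω ^ l := fun l => ep_int_mul N l _
  by_cases hdvd : (N : ℤ) ∣ x
  · have hω1 : ω = 1 := (ep_eq_one N hN0 x).2 hdvd
    simp only [hterm, hω1, one_zpow, if_pos hdvd, Finset.sum_const, nsmul_eq_mul, mul_one]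
    rw [Zf, Int.card_Icc]
    congr 1
    omega
  · have hω1 : ω ≠ 1 := fun h => hdvd ((ep_eq_one N hN0 x).1 h)
    rw [if_neg hdvd]
    simp only [hterm]
    have key : (∑ l ∈ Zf N, ω ^ l) * ω ^ M = ∑ a ∈ Finset.range N, ω ^ a := by
      rw [Finset.sum_mul]
      refine Finset.sum_nbij' (fun l => (l + M).toNat) (fun a => (a : ℤ) - M) ?_ ?_ ?_ ?_ ?_
      · intro l hl
        rw [Zf, Finset.mem_Icc] at hl
        rw [Finset.mem_range]
        omega
      · intro a ha
        rw [Finset.mem_range] at ha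
        rw [Zf, Finset.mem_Icc]
        omega
      · intro l hl
        rw [Zf, Finset.mem_Icc] at hl
        omega
      · intro a ha
        rw [Finset.mem_range] at ha
        omega
      · intro l hl
        rw [Zf, Finset.mem_Icc] at hl
        rw [← zpow_natCast, Int.toNat_of_nonneg (by omega), zpow_add₀ hωne]
    have hgeom : ∑ a ∈ Finset.range N, ω ^ a = (ω ^ N - 1) / (ω - 1) := geom_sum_eq hω1 N
    have : (∑ l ∈ Zf N, ω ^ l) * ω ^ M = 0 := by
      rw [key, hgeom, ep_pow_N N hN0 x, sub_self, zero_div]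
    exact (mul_eq_zero.1 this).resolve_right (zpow_ne_zero _ hωne)

lemma zf_sub_dvd (N : ℕ) (hN0 : 0 < N) {a b : ℤ} (ha : a ∈ Zf N) (hb : b ∈ Zf N) :
    (N : ℤ) ∣ a - b ↔ a = b := by
  rw [Zf, Finset.mem_Icc] at ha hb
  constructor
  · intro h
    have := Int.eq_zero_of_abs_lt_dvd h (by rw [abs_lt]; omega)
    omega
  · rintro rfl; simp

lemma Dk_eq (N : ℕ) (t : ℝ) :
    Dk N t = (N : ℂ)⁻¹ * ∑ l ∈ Zf N, ep N ((l : ℂ) * (t : ℂ)) := by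
  rw [Dk]
  congr 1
  refine Finset.sum_congr rfl fun l _ => ?_
  rw [ep]
  congr 1
  ring

lemma Dk_int (N : ℕ) (hN : Odd N) (t : ℤ) :
    Dk N ((t : ℤ) : ℝ) = if (N : ℤ) ∣ t then 1 else 0 := by
  have hN0 : 0 < N := hN.pos
  have hNc : (N : ℂ) ≠ 0 := by exact_mod_cast hN0.ne'
  rw [Dk_eq]
  have : ∑ l ∈ Zf N, ep N ((l : ℂ) * (((t : ℤ) : ℝ) : ℂ)) = ∑ l ∈ Zf N, ep N ((l : ℂ) * (t : ℂ)) := by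
    refine Finset.sum_congr rfl fun l _ => ?_
    norm_cast
  rw [this, sum_ep N hN t]
  split <;> simp [hNc]

lemma odd_N (n : ℕ) (hn3 : 3 ≤ n) : Odd (2 * n - 1) := ⟨n - 1, by omega⟩

lemma zf_subset (n : ℕ) (hn3 : 3 ≤ n) : Zf n ⊆ Zf (2 * n - 1) := by
  apply Finset.Icc_subset_Icc <;> omega

lemma Dk_delta (n : ℕ) (hn3 : 3 ≤ n) {i j : ℤ} (hi : i ∈ Zf n) (hj : j ∈ Zf n) :
    Dk (2 * n - 1) ((i : ℝ) - (j : ℝ)) = if i = j then 1 else 0 := by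
  have h1 : ((i : ℝ) - (j : ℝ)) = (((i - j : ℤ) : ℤ) : ℝ) := by push_cast; ring
  rw [h1, Dk_int _ (odd_N n hn3)]
  simp only [zf_sub_dvd _ (show 0 < 2 * n - 1 by omega) (zf_subset n hn3 hi)
    (zf_subset n hn3 hj)]

lemma interp_fst (n : ℕ) (hn3 : 3 ≤ n) (h : ℤ → ℤ → ℤ → ℂ) {i : ℤ} (hi : i ∈ Zf n)
    (y z : ℝ) :
    interp n h (i : ℝ) y z
      = ∑ j ∈ Zf n, ∑ k ∈ Zf n, h i j k * Dk (2 * n - 1) (y - (j : ℝ)) *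
          Dk (2 * n - 1) (z - (k : ℝ)) := by
  rw [interp]
  rw [Finset.sum_eq_single_of_mem i hi]
  · refine Finset.sum_congr rfl fun j _ => Finset.sum_congr rfl fun k _ => ?_
    rw [Dk_delta n hn3 hi hi, if_pos rfl]
    ring
  · intro i' _ hne
    refine Finset.sum_eq_zero fun j _ => Finset.sum_eq_zero fun k _ => ?_
    rw [Dk_delta n hn3 hi ‹i' ∈ Zf n›, if_neg (Ne.symm hne)]
    ring

lemma sumB (n : ℕ) (hn3 : 3 ≤ n) {η : ℤ} (hη : η ∈ Zf (2 * n - 1)) (s : ℝ) :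
    ∑ c ∈ Zf (2 * n - 1), Dk (2 * n - 1) (s + (c : ℝ)) * ep (2 * n - 1) (-((η : ℂ) * (c : ℂ)))
      = ep (2 * n - 1) ((η : ℂ) * (s : ℂ)) := by
  have hNodd := odd_N n hn3
  have hN0 : 0 < 2 * n - 1 := by omega
  have hNc : ((2 * n - 1 : ℕ) : ℂ) ≠ 0 := by
    exact_mod_cast hN0.ne'
  calc ∑ c ∈ Zf (2 * n - 1), Dk (2 * n - 1) (s + (c : ℝ)) * ep (2 * n - 1) (-((η : ℂ) * (c : ℂ)))
      = ∑ c ∈ Zf (2 * n - 1), ∑ l ∈ Zf (2 * n - 1),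
          ((2 * n - 1 : ℕ) : ℂ)⁻¹ *
            (ep (2 * n - 1) ((l : ℂ) * (s : ℂ)) * ep (2 * n - 1) (((l - η : ℤ) : ℂ) * (c : ℂ))) := by
        refine Finset.sum_congr rfl fun c _ => ?_
        rw [Dk_eq, mul_assoc, Finset.sum_mul, Finset.mul_sum]
        refine Finset.sum_congr rfl fun l _ => ?_
        congr 1
        rw [← ep_add, ← ep_add]
        congr 1
        push_cast
        ring
    _ = ∑ l ∈ Zf (2 * n - 1),
          ((2 * n - 1 : ℕ) : ℂ)⁻¹ * ep (2 * n - 1) ((l : ℂ) * (s : ℂ)) *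
            ∑ c ∈ Zf (2 * n - 1), ep (2 * n - 1) ((c : ℂ) * ((l - η : ℤ) : ℂ)) := by
        rw [Finset.sum_comm]
        refine Finset.sum_congr rfl fun l _ => ?_
        rw [Finset.mul_sum]
        refine Finset.sum_congr rfl fun c _ => ?_
        rw [mul_comm ((l - η : ℤ) : ℂ) ((c : ℤ) : ℂ), ← mul_assoc]
    _ = ep (2 * n - 1) ((η : ℂ) * (s : ℂ)) := by
        rw [Finset.sum_eq_single_of_mem η hη]
        · rw [sum_ep _ hNodd, if_pos (by simp), mul_comm, ← mul_assoc,
            mul_inv_cancel₀ hNc, one_mul]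
        · intro l hl hne
          rw [sum_ep _ hNodd, if_neg, mul_zero]
          rw [zf_sub_dvd _ hN0 hl hη]
          omega

def Hcoef (n : ℕ) (h : ℤ → ℤ → ℤ → ℂ) (i η ζ : ℤ) : ℂ :=
  ∑ j ∈ Zf n, ∑ k ∈ Zf n, h i j k * ep (2 * n - 1) (-((η : ℂ) * (j : ℂ) + (ζ : ℂ) * (k : ℂ)))

lemma ft2_proj (n : ℕ) (hn3 : 3 ≤ n) (h : ℤ → ℤ → ℤ → ℂ) (α β : ℝ) {η ζ : ℤ}
    (hη : η ∈ Zf (2 * n - 1)) (hζ : ζ ∈ Zf (2 * n - 1)) :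
    ft2 n (proj n h (Dir.dx α β)) (η : ℝ) (ζ : ℝ)
      = ∑ i ∈ Zf n, Hcoef n h i η ζ *
          ep (2 * n - 1) ((((α * (η : ℝ) + β * (ζ : ℝ)) : ℝ) : ℂ) * (i : ℂ)) := by
  calc ft2 n (proj n h (Dir.dx α β)) (η : ℝ) (ζ : ℝ)
      = ∑ c ∈ Zf2 (2 * n - 1), ∑ i ∈ Zf n, ∑ j ∈ Zf n, ∑ k ∈ Zf n,
          h i j k * Dk (2 * n - 1) (α * (i : ℝ) + (c.1 : ℝ) - (j : ℝ)) *
            Dk (2 * n - 1) (β * (i : ℝ) + (c.2 : ℝ) - (k : ℝ)) *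
            (ep (2 * n - 1) (-((η : ℂ) * (c.1 : ℂ))) * ep (2 * n - 1) (-((ζ : ℂ) * (c.2 : ℂ)))) := by
        rw [ft2]
        refine Finset.sum_congr rfl fun c hc => ?_
        have hproj : proj n h (Dir.dx α β) c
            = ∑ i ∈ Zf n, ∑ j ∈ Zf n, ∑ k ∈ Zf n,
                h i j k * Dk (2 * n - 1) (α * (i : ℝ) + (c.1 : ℝ) - (j : ℝ)) *
                  Dk (2 * n - 1) (β * (i : ℝ) + (c.2 : ℝ) - (k : ℝ)) := by
          show (if c ∈ Zf2 (2 * n - 1) then _ else 0) = _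
          rw [if_pos hc]
          exact Finset.sum_congr rfl fun i hi => interp_fst n hn3 h hi _ _
        have hexp : Complex.exp (-(2 * (Real.pi : ℂ) * Complex.I) *
              (((η : ℝ) : ℂ) * ((c.1 : ℤ) : ℂ) + ((ζ : ℝ) : ℂ) * ((c.2 : ℤ) : ℂ)) /
                (((2 * n - 1 : ℕ) : ℂ)))
            = ep (2 * n - 1) (-((η : ℂ) * (c.1 : ℂ))) * ep (2 * n - 1) (-((ζ : ℂ) * (c.2 : ℂ))) := by
          rw [← ep_add, ep]
          congr 1
          push_cast
          ring
        rw [hproj, hexp, Finset.sum_mul]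
        refine Finset.sum_congr rfl fun i _ => ?_
        rw [Finset.sum_mul]
        refine Finset.sum_congr rfl fun j _ => ?_
        rw [Finset.sum_mul]
    _ = ∑ i ∈ Zf n, ∑ j ∈ Zf n, ∑ k ∈ Zf n, ∑ c ∈ Zf2 (2 * n - 1),
          h i j k * Dk (2 * n - 1) (α * (i : ℝ) + (c.1 : ℝ) - (j : ℝ)) *
            Dk (2 * n - 1) (β * (i : ℝ) + (c.2 : ℝ) - (k : ℝ)) *
            (ep (2 * n - 1) (-((η : ℂ) * (c.1 : ℂ))) * ep (2 * n - 1) (-((ζ : ℂ) * (c.2 : ℂ)))) := by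
        rw [Finset.sum_comm]
        refine Finset.sum_congr rfl fun i _ => ?_
        rw [Finset.sum_comm]
        refine Finset.sum_congr rfl fun j _ => ?_
        rw [Finset.sum_comm]
    _ = ∑ i ∈ Zf n, ∑ j ∈ Zf n, ∑ k ∈ Zf n,
          h i j k * (ep (2 * n - 1) ((η : ℂ) * (((α * (i : ℝ) - (j : ℝ)) : ℝ) : ℂ)) *
            ep (2 * n - 1) ((ζ : ℂ) * (((β * (i : ℝ) - (k : ℝ)) : ℝ) : ℂ))) := by
        refine Finset.sum_congr rfl fun i _ => Finset.sum_congr rfl fun j _ =>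
          Finset.sum_congr rfl fun k _ => ?_
        rw [← sumB n hn3 hη (α * (i : ℝ) - (j : ℝ)), ← sumB n hn3 hζ (β * (i : ℝ) - (k : ℝ)),
          Finset.sum_mul_sum, Zf2, Finset.sum_product, Finset.mul_sum]
        refine Finset.sum_congr rfl fun c1 _ => ?_
        rw [Finset.mul_sum]
        refine Finset.sum_congr rfl fun c2 _ => ?_
        dsimp only
        rw [show α * (i : ℝ) + ((c1 : ℤ) : ℝ) - (j : ℝ) = α * (i : ℝ) - (j : ℝ) + ((c1 : ℤ) : ℝ)
            from by ring,
          show β * (i : ℝ) + ((c2 : ℤ) : ℝ) - (k : ℝ) = β * (i : ℝ) - (k : ℝ) + ((c2 : ℤ) : ℝ)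
            from by ring]
        ring
    _ = ∑ i ∈ Zf n, Hcoef n h i η ζ *
          ep (2 * n - 1) ((((α * (η : ℝ) + β * (ζ : ℝ)) : ℝ) : ℂ) * (i : ℂ)) := by
        refine Finset.sum_congr rfl fun i _ => ?_
        rw [Hcoef, Finset.sum_mul]
        refine Finset.sum_congr rfl fun j _ => ?_
        rw [Finset.sum_mul]
        refine Finset.sum_congr rfl fun k _ => ?_
        rw [mul_assoc, ← ep_add, ← ep_add]
        congr 2
        push_cast
        ring

lemma w_inj (n : ℕ) (hn3 : 3 ≤ n) (α β : Fin n → ℝ) (hdiv : Diversity n α β)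
    {η ζ : ℤ} (hmem : (η, ζ) ∈ Zf2 (2 * n - 1)) (hne : (η, ζ) ≠ (0, 0)) :
    Function.Injective
      (fun l : Fin n => ep (2 * n - 1) (((α l * (η : ℝ) + β l * (ζ : ℝ) : ℝ) : ℂ))) := by
  intro l l' hww
  by_contra hne'
  refine hdiv.2 (η, ζ) hmem hne l l' hne' ?_
  simp only [ep] at hww
  rw [Complex.exp_eq_exp_iff_exists_int] at hww
  obtain ⟨z, hz⟩ := hww
  refine ⟨z, ?_⟩
  have hNc : ((2 * n - 1 : ℕ) : ℂ) ≠ 0 := by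
    have : (0:ℕ) < 2 * n - 1 := by omega
    exact_mod_cast this.ne'
  have h2 := congrArg (· * ((2 * n - 1 : ℕ) : ℂ)) hz
  rw [div_mul_cancel₀ _ hNc, add_mul, div_mul_cancel₀ _ hNc] at h2
  have h4 : (2 * (Real.pi : ℂ) * Complex.I) * (((α l * (η : ℝ) + β l * (ζ : ℝ) : ℝ)) : ℂ)
      = (2 * (Real.pi : ℂ) * Complex.I) *
        ((((α l' * (η : ℝ) + β l' * (ζ : ℝ) : ℝ)) : ℂ) + (z : ℂ) * ((2 * n - 1 : ℕ) : ℂ)) := by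
    linear_combination h2
  have h3 := mul_left_cancel₀ Complex.two_pi_I_ne_zero h4
  have h5 : (((α l * (η : ℝ) + β l * (ζ : ℝ) - (α l' * (η : ℝ) + β l' * (ζ : ℝ)) : ℝ)) : ℂ)
      = (((z : ℝ) * ((2 * n - 1 : ℕ) : ℝ) : ℝ) : ℂ) := by
    push_cast
    push_cast at h3
    linear_combination h3
  exact_mod_cast h5

lemma coeff_vanish (n : ℕ) (hn : Odd n) (hn3 : 3 ≤ n) (h : ℤ → ℤ → ℤ → ℂ)
    (α β : Fin n → ℝ) (hdiv : Diversity n α β) (c : ℤ × ℤ → ℂ)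
    (hc : ∀ l : Fin n, ∀ η ζ : ℤ,
      ft2 n (proj n h (Dir.dx (α l) (β l))) (η : ℝ) (ζ : ℝ) = c (η, ζ))
    {η ζ : ℤ} (hmem : (η, ζ) ∈ Zf2 (2 * n - 1)) (hne : (η, ζ) ≠ (0, 0)) :
    ∀ i ∈ Zf n, i ≠ 0 → Hcoef n h i η ζ = 0 := by
  have hη : η ∈ Zf (2 * n - 1) := (Finset.mem_product.1 hmem).1
  have hζ : ζ ∈ Zf (2 * n - 1) := (Finset.mem_product.1 hmem).2
  set M : ℤ := (((n : ℤ)) - 1) / 2 with hM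
  have hnM : (n : ℤ) = 2 * M + 1 := by
    obtain ⟨m, hm⟩ := hn; omega
  have hM0 : 0 ≤ M := by omega
  set w : Fin n → ℂ := fun l => ep (2 * n - 1) (((α l * (η : ℝ) + β l * (ζ : ℝ) : ℝ) : ℂ))
    with hw
  have hwinj : Function.Injective w := w_inj n hn3 α β hdiv hmem hne
  have hwne : ∀ l, w l ≠ 0 := fun l => ep_ne_zero _ _
  set a : ℤ → ℂ := fun i => Hcoef n h i η ζ - (if i = 0 then c (η, ζ) else 0) with ha
  have h0mem : (0 : ℤ) ∈ Zf n := by rw [Zf, Finset.mem_Icc]; omega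
  -- the values
  have hval : ∀ l : Fin n, ∑ i ∈ Zf n, a i * (w l) ^ (i : ℤ) = 0 := by
    intro l
    have h1 : ∑ i ∈ Zf n, Hcoef n h i η ζ * (w l) ^ (i : ℤ) = c (η, ζ) := by
      rw [← hc l η ζ, ft2_proj n hn3 h (α l) (β l) hη hζ]
      refine Finset.sum_congr rfl fun i _ => ?_
      congr 1
      rw [hw, ← ep_int_mul]
      exact congrArg (ep (2 * n - 1)) (mul_comm _ _)
    calc ∑ i ∈ Zf n, a i * (w l) ^ (i : ℤ)
        = (∑ i ∈ Zf n, Hcoef n h i η ζ * (w l) ^ (i : ℤ)) -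
            ∑ i ∈ Zf n, (if i = 0 then c (η, ζ) else 0) * (w l) ^ (i : ℤ) := by
          rw [← Finset.sum_sub_distrib]
          refine Finset.sum_congr rfl fun i _ => ?_
          rw [ha]; ring
      _ = 0 := by
          rw [h1, Finset.sum_eq_single_of_mem 0 h0mem
            (fun i' _ hne' => by rw [if_neg hne', zero_mul])]
          simp
  -- the polynomial
  set Q : Polynomial ℂ := ∑ i ∈ Zf n, Polynomial.C (a i) * Polynomial.X ^ (i + M).toNat
    with hQ
  have hQdeg : Q.natDegree < n := by
    have : Q.natDegree ≤ n - 1 := by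
      refine Polynomial.natDegree_sum_le_of_forall_le _ _ fun i hi => ?_
      refine le_trans (Polynomial.natDegree_C_mul_le _ _) ?_
      refine le_trans (Polynomial.natDegree_X_pow_le _) ?_
      rw [Zf, Finset.mem_Icc] at hi
      omega
    omega
  have hQeval : ∀ l : Fin n, Q.eval (w l) = 0 := by
    intro l
    rw [hQ]
    rw [Polynomial.eval_finset_sum]
    have h2 : ∀ i ∈ Zf n,
        (Polynomial.C (a i) * Polynomial.X ^ (i + M).toNat).eval (w l)
          = (a i * (w l) ^ (i : ℤ)) * (w l) ^ (M : ℤ) := by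
      intro i hi
      rw [Zf, Finset.mem_Icc] at hi
      rw [Polynomial.eval_mul, Polynomial.eval_C, Polynomial.eval_pow, Polynomial.eval_X,
        ← zpow_natCast, Int.toNat_of_nonneg (by omega), zpow_add₀ (hwne l), mul_assoc]
    rw [Finset.sum_congr rfl h2, ← Finset.sum_mul, hval l, zero_mul]
  have hQ0 : Q = 0 :=
    Polynomial.eq_zero_of_natDegree_lt_card_of_eval_eq_zero Q hwinj hQeval
      (by rwa [Fintype.card_fin])
  -- extract coefficients
  intro i hi hi0
  have hcoeff : Q.coeff (i + M).toNat = a i := by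
    rw [hQ, Polynomial.finset_sum_coeff]
    rw [Finset.sum_eq_single_of_mem i hi]
    · rw [Polynomial.coeff_C_mul, Polynomial.coeff_X_pow, if_pos rfl, mul_one]
    · intro i' hi' hne'
      rw [Polynomial.coeff_C_mul, Polynomial.coeff_X_pow, if_neg, mul_zero]
      rw [Zf, Finset.mem_Icc] at hi hi'
      omega
  have : a i = 0 := by rw [← hcoeff, hQ0, Polynomial.coeff_zero]
  rw [ha] at this
  simp only [if_neg hi0, sub_zero] at this
  exact this

lemma card_Zf (n : ℕ) (hn : Odd n) : (Zf n).card = n := by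
  obtain ⟨m, hm⟩ := hn
  rw [Zf, Int.card_Icc]
  omega

lemma Hcoef00 (n : ℕ) (h : ℤ → ℤ → ℤ → ℂ) (i : ℤ) :
    Hcoef n h i 0 0 = ∑ j ∈ Zf n, ∑ k ∈ Zf n, h i j k := by
  rw [Hcoef]
  refine Finset.sum_congr rfl fun j _ => Finset.sum_congr rfl fun k _ => ?_
  simp [ep_zero]

lemma sum_swap4 {M : Type*} [AddCommMonoid M] {A B C D : Type*}
    (s1 : Finset A) (s2 : Finset B) (s3 : Finset C) (s4 : Finset D)
    (f : A → B → C → D → M) :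
    ∑ a ∈ s1, ∑ b ∈ s2, ∑ c ∈ s3, ∑ d ∈ s4, f a b c d
      = ∑ c ∈ s3, ∑ d ∈ s4, ∑ a ∈ s1, ∑ b ∈ s2, f a b c d :=
  calc ∑ a ∈ s1, ∑ b ∈ s2, ∑ c ∈ s3, ∑ d ∈ s4, f a b c d
      = ∑ a ∈ s1, ∑ c ∈ s3, ∑ b ∈ s2, ∑ d ∈ s4, f a b c d :=
        Finset.sum_congr rfl fun a _ => Finset.sum_comm
    _ = ∑ c ∈ s3, ∑ a ∈ s1, ∑ b ∈ s2, ∑ d ∈ s4, f a b c d := Finset.sum_comm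
    _ = ∑ c ∈ s3, ∑ a ∈ s1, ∑ d ∈ s4, ∑ b ∈ s2, f a b c d :=
        Finset.sum_congr rfl fun c _ => Finset.sum_congr rfl fun a _ => Finset.sum_comm
    _ = ∑ c ∈ s3, ∑ d ∈ s4, ∑ a ∈ s1, ∑ b ∈ s2, f a b c d :=
        Finset.sum_congr rfl fun c _ => Finset.sum_comm

lemma inversion (n : ℕ) (hn3 : 3 ≤ n) (h : ℤ → ℤ → ℤ → ℂ) (i : ℤ)
    {j0 k0 : ℤ} (hj0 : j0 ∈ Zf n) (hk0 : k0 ∈ Zf n) :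
    ∑ η ∈ Zf (2 * n - 1), ∑ ζ ∈ Zf (2 * n - 1),
        Hcoef n h i η ζ * ep (2 * n - 1) ((η : ℂ) * (j0 : ℂ) + (ζ : ℂ) * (k0 : ℂ))
      = ((2 * n - 1 : ℕ) : ℂ) ^ 2 * h i j0 k0 := by
  have hNodd := odd_N n hn3
  have hN0 : 0 < 2 * n - 1 := by omega
  calc ∑ η ∈ Zf (2 * n - 1), ∑ ζ ∈ Zf (2 * n - 1),
        Hcoef n h i η ζ * ep (2 * n - 1) ((η : ℂ) * (j0 : ℂ) + (ζ : ℂ) * (k0 : ℂ))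
      = ∑ η ∈ Zf (2 * n - 1), ∑ ζ ∈ Zf (2 * n - 1), ∑ j ∈ Zf n, ∑ k ∈ Zf n,
          h i j k * (ep (2 * n - 1) ((η : ℂ) * ((j0 - j : ℤ) : ℂ)) *
            ep (2 * n - 1) ((ζ : ℂ) * ((k0 - k : ℤ) : ℂ))) := by
        refine Finset.sum_congr rfl fun η _ => Finset.sum_congr rfl fun ζ _ => ?_
        rw [Hcoef, Finset.sum_mul]
        refine Finset.sum_congr rfl fun j _ => ?_
        rw [Finset.sum_mul]
        refine Finset.sum_congr rfl fun k _ => ?_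
        rw [mul_assoc]
        congr 1
        rw [← ep_add, ← ep_add]
        congr 1
        push_cast
        ring
    _ = ∑ j ∈ Zf n, ∑ k ∈ Zf n, ∑ η ∈ Zf (2 * n - 1), ∑ ζ ∈ Zf (2 * n - 1),
          h i j k * (ep (2 * n - 1) ((η : ℂ) * ((j0 - j : ℤ) : ℂ)) *
            ep (2 * n - 1) ((ζ : ℂ) * ((k0 - k : ℤ) : ℂ))) := by
        exact sum_swap4 _ _ _ _ _
    _ = ∑ j ∈ Zf n, ∑ k ∈ Zf n, h i j k *
          ((∑ η ∈ Zf (2 * n - 1), ep (2 * n - 1) ((η : ℂ) * ((j0 - j : ℤ) : ℂ))) *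
            (∑ ζ ∈ Zf (2 * n - 1), ep (2 * n - 1) ((ζ : ℂ) * ((k0 - k : ℤ) : ℂ)))) := by
        refine Finset.sum_congr rfl fun j _ => Finset.sum_congr rfl fun k _ => ?_
        rw [Finset.sum_mul_sum, Finset.mul_sum]
        refine Finset.sum_congr rfl fun η _ => ?_
        rw [Finset.mul_sum]
    _ = ∑ j ∈ Zf n, ∑ k ∈ Zf n, h i j k *
          ((if j0 = j then ((2 * n - 1 : ℕ) : ℂ) else 0) *
            (if k0 = k then ((2 * n - 1 : ℕ) : ℂ) else 0)) := by
        refine Finset.sum_congr rfl fun j hj => Finset.sum_congr rfl fun k hk => ?_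
        rw [sum_ep _ hNodd, sum_ep _ hNodd]
        simp only [zf_sub_dvd _ hN0 (zf_subset n hn3 hj0) (zf_subset n hn3 hj),
          zf_sub_dvd _ hN0 (zf_subset n hn3 hk0) (zf_subset n hn3 hk)]
    _ = ((2 * n - 1 : ℕ) : ℂ) ^ 2 * h i j0 k0 := by
        rw [Finset.sum_eq_single_of_mem j0 hj0 (fun j _ hne => Finset.sum_eq_zero fun k _ => by
          rw [if_neg (fun hh => hne hh.symm), zero_mul, mul_zero]),
          Finset.sum_eq_single_of_mem k0 hk0 (fun k _ hne => by
            rw [if_neg (show ¬ k0 = k from fun hh => hne hh.symm), mul_zero, mul_zero]),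
          if_pos rfl, if_pos rfl]
        ring

lemma plane_case (n : ℕ) (hn : Odd n) (hn3 : 3 ≤ n) (h : ℤ → ℤ → ℤ → ℂ)
    (α β : Fin n → ℝ) (hdiv : Diversity n α β) (c : ℤ × ℤ → ℂ)
    (hc : ∀ l : Fin n, ∀ η ζ : ℤ,
      ft2 n (proj n h (Dir.dx (α l) (β l))) (η : ℝ) (ζ : ℝ) = c (η, ζ))
    {i : ℤ} (hi0 : i ≠ 0) (hi : i ∈ Zf n) {j0 k0 : ℤ} (hj0 : j0 ∈ Zf n) (hk0 : k0 ∈ Zf n) :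
    h i j0 k0 = 0 := by
  have hNodd := odd_N n hn3
  have h0N : (0 : ℤ) ∈ Zf (2 * n - 1) := by rw [Zf, Finset.mem_Icc]; omega
  have hvanish : ∀ η ζ : ℤ, η ∈ Zf (2 * n - 1) → ζ ∈ Zf (2 * n - 1) → ¬(η = 0 ∧ ζ = 0) →
      Hcoef n h i η ζ = 0 := by
    intro η ζ hη hζ hne
    exact coeff_vanish n hn hn3 h α β hdiv c hc (Finset.mem_product.2 ⟨hη, hζ⟩)
      (by simp only [ne_eq, Prod.mk.injEq]; tauto) i hi hi0
  -- key identity: for all j0 k0 ∈ Zf n, N² h i j0 k0 = Hcoef i 0 0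
  have key : ∀ j1 k1 : ℤ, j1 ∈ Zf n → k1 ∈ Zf n →
      ((2 * n - 1 : ℕ) : ℂ) ^ 2 * h i j1 k1 = Hcoef n h i 0 0 := by
    intro j1 k1 hj1 hk1
    rw [← inversion n hn3 h i hj1 hk1]
    rw [Finset.sum_eq_single_of_mem 0 h0N (fun η hη hne => Finset.sum_eq_zero fun ζ hζ => by
      rw [hvanish η ζ hη hζ (fun hh => hne hh.1), zero_mul]),
      Finset.sum_eq_single_of_mem 0 h0N (fun ζ hζ hne => by
        rw [hvanish 0 ζ h0N hζ (fun hh => hne hh.2), zero_mul])]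
    simp [ep_zero]
  -- deduce Hcoef i 0 0 = 0
  have hN2 : ((2 * n - 1 : ℕ) : ℂ) ^ 2 ≠ 0 := by
    have : (0:ℕ) < 2 * n - 1 := by omega
    have h1 : ((2 * n - 1 : ℕ) : ℂ) ≠ 0 := by exact_mod_cast this.ne'
    exact pow_ne_zero _ h1
  have hNn : ((2 * n - 1 : ℕ) : ℂ) ^ 2 ≠ ((n : ℕ) : ℂ) ^ 2 := by
    intro hcon
    have h2 : (2 * n - 1) ^ 2 = n ^ 2 := by exact_mod_cast hcon
    have hlt : n ^ 2 < (2 * n - 1) ^ 2 :=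
      Nat.pow_lt_pow_left (by omega) two_ne_zero
    exact hlt.ne' h2
  have hC0 : Hcoef n h i 0 0 = 0 := by
    have hsum : ((2 * n - 1 : ℕ) : ℂ) ^ 2 * Hcoef n h i 0 0
        = ((n : ℕ) : ℂ) ^ 2 * Hcoef n h i 0 0 := by
      calc ((2 * n - 1 : ℕ) : ℂ) ^ 2 * Hcoef n h i 0 0
          = ∑ j ∈ Zf n, ∑ k ∈ Zf n, ((2 * n - 1 : ℕ) : ℂ) ^ 2 * h i j k := by
            rw [Hcoef00, Finset.mul_sum]
            exact Finset.sum_congr rfl fun j _ => Finset.mul_sum _ _ _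
        _ = ∑ j ∈ Zf n, ∑ k ∈ Zf n, Hcoef n h i 0 0 :=
            Finset.sum_congr rfl fun j hj => Finset.sum_congr rfl fun k hk => key j k hj hk
        _ = ((n : ℕ) : ℂ) ^ 2 * Hcoef n h i 0 0 := by
            rw [Finset.sum_const, Finset.sum_const, card_Zf n hn, nsmul_eq_mul, nsmul_eq_mul]
            push_cast
            ring
    by_contra hC
    exact hNn (mul_right_cancel₀ hC hsum)
  have hkey := key j0 k0 hj0 hk0
  rw [hC0] at hkey
  exact (mul_eq_zero.1 hkey).resolve_left hN2

/-- Plane-support claim. -/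
theorem plane_support
    (n : ℕ) (hn : Odd n) (hn3 : 3 ≤ n)
    (h : ℤ → ℤ → ℤ → ℂ) (hobj : IsObj n h)
    (α β : Fin n → ℝ) (hdiv : Diversity n α β)
    (c : ℤ × ℤ → ℂ)
    (hc : ∀ l : Fin n, ∀ η ζ : ℤ,
      ft2 n (proj n h (Dir.dx (α l) (β l))) (η : ℝ) (ζ : ℝ) = c (η, ζ)) :
    ∀ m j k : ℤ, m ≠ 0 → h m j k = 0 := by
  intro m j k hm
  by_cases hmZ : m ∈ Zf n
  · by_cases hjZ : j ∈ Zf n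
    · by_cases hkZ : k ∈ Zf n
      · exact plane_case n hn hn3 h α β hdiv c hc hm hmZ hjZ hkZ
      · exact hobj m j k (Or.inr (Or.inr hkZ))
    · exact hobj m j k (Or.inr (Or.inl hjZ))
  · exact hobj m j k (Or.inl hmZ)

end Tomo3D
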